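/- Suppose the incidence graph of a projective plane of order q has a resolving partition with r classes consisting only of points, s classes consisting only of lines, and t mixed classes (containing both a point and a line). Then (s+t)·2^{r+t-1} ≥ q²+q+1. -/

import Mathlib

open Configuration

/-- The incidence (Levi) graph of a point-line geometry. -/
def incGraph (P L : Type*) [Membership P L] : SimpleGraph (P ⊕ L) where
  Adj x y := match x, y with
    | Sum.inl p, Sum.inr l => p ∈ l
    | Sum.inr l, Sum.inl p => p ∈ l
    | _, _ => False
  symm := ⟨by rintro (p | l) (p' | l') h <;> simp_all⟩
  loopless := ⟨by rintro (p | l) h <;> simp_all⟩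

/-- Distance from a vertex to a set of vertices (minimum distance to an element). -/
noncomputable def setDist {V : Type*} (G : SimpleGraph V) (v : V) (S : Set V) : ℕ :=
  sInf (G.dist v '' S)

/-- An indexed family of sets is a resolving partition of the vertex set of `G`:
the classes are nonempty, pairwise disjoint, cover `V`, and the distance vectors
`i ↦ d(v, S i)` are pairwise distinct. -/
def IsResolvingPartition {V ι : Type*} (G : SimpleGraph V) (S : ι → Set V) : Prop :=
  (∀ i, (S i).Nonempty) ∧ (Pairwise fun i j => Disjoint (S i) (S j)) ∧
    (⋃ i, S i) = Set.univ ∧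
    ∀ u v : V, (∀ i, setDist G u (S i) = setDist G v (S i)) → u = v

/-- The partition dimension of a graph. -/
noncomputable def partitionDim {V : Type*} (G : SimpleGraph V) : ℕ :=
  sInf {k | ∃ S : Fin k → Set V, IsResolvingPartition G S}

/-- A set of vertices is a resolving set for `G`. -/
def IsResolvingSet {V : Type*} (G : SimpleGraph V) (W : Set V) : Prop :=
  ∀ u v : V, (∀ w ∈ W, G.dist u w = G.dist v w) → u = v

/-- The metric dimension of a graph. -/
noncomputable def metricDim {V : Type*} (G : SimpleGraph V) : ℕ :=
  sInf {k | ∃ W : Set V, W.ncard = k ∧ IsResolvingSet G W}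

section Aux

variable {P L : Type*} [Membership P L]

lemma incGraph_adj_pl {p : P} {l : L} : (incGraph P L).Adj (Sum.inl p) (Sum.inr l) ↔ p ∈ l :=
  Iff.rfl

lemma incGraph_adj_lp {p : P} {l : L} : (incGraph P L).Adj (Sum.inr l) (Sum.inl p) ↔ p ∈ l :=
  Iff.rfl

lemma incGraph_not_adj_ll {l l' : L} : ¬ (incGraph P L).Adj (Sum.inr l) (Sum.inr l') :=
  fun h => h

lemma incGraph_walk_even {x y : P ⊕ L} (w : (incGraph P L).Walk x y) :
    Even w.length ↔ x.isLeft = y.isLeft := by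
  induction w with
  | nil => simp
  | @cons a b c h w ih =>
    have hab : a.isLeft = !b.isLeft := by
      rcases a with p | l <;> rcases b with p' | l' <;> simp_all [incGraph]
    rw [SimpleGraph.Walk.length_cons, Nat.even_add_one, ih, hab]
    cases b.isLeft <;> cases c.isLeft <;> simp

lemma setDist_eq_of {V : Type*} {G : SimpleGraph V} {v : V} {T : Set V} {d : ℕ}
    (h1 : ∃ x ∈ T, G.dist v x = d) (h2 : ∀ x ∈ T, d ≤ G.dist v x) : setDist G v T = d := by
  obtain ⟨x, hx, hd⟩ := h1
  refine le_antisymm (hd ▸ Nat.sInf_le ⟨x, hx, rfl⟩) (le_csInf ⟨_, x, hx, rfl⟩ ?_)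
  rintro b ⟨y, hy, rfl⟩
  exact h2 y hy

variable [Fintype P] [Fintype L] [ProjectivePlane P L]

lemma dist_lp_mem {p : P} {l : L} (h : p ∈ l) :
    (incGraph P L).dist (Sum.inr l) (Sum.inl p) = 1 :=
  SimpleGraph.dist_eq_one_iff_adj.mpr (incGraph_adj_lp.mpr h)

lemma dist_ll {l l' : L} (h : l ≠ l') :
    (incGraph P L).dist (Sum.inr l) (Sum.inr l') = 2 := by
  have hp := HasPoints.mkPoint_ax (P := P) h
  let w : (incGraph P L).Walk (Sum.inr l) (Sum.inr l') :=
    .cons (incGraph_adj_lp.mpr hp.1) (.cons (incGraph_adj_pl.mpr hp.2) .nil)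
  have hlen : w.length = 2 := rfl
  have hle := hlen ▸ SimpleGraph.dist_le w
  have h1 : (incGraph P L).dist (Sum.inr l) (Sum.inr l') ≠ 1 := by
    simp only [ne_eq, SimpleGraph.dist_eq_one_iff_adj]
    exact incGraph_not_adj_ll
  have h0 : (incGraph P L).dist (Sum.inr l) (Sum.inr l') ≠ 0 := by
    rw [SimpleGraph.dist_ne_zero_iff_ne_and_reachable]
    exact ⟨by simpa using h, ⟨w⟩⟩
  omega

lemma dist_lp_not_mem {p : P} {l : L} (h : p ∉ l) :
    (incGraph P L).dist (Sum.inr l) (Sum.inl p) = 3 := by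
  obtain ⟨x, hx⟩ : ∃ x : P, x ∈ l := by
    have h1 : Nat.card {x : P // x ∈ l} = ProjectivePlane.order P L + 1 :=
      ProjectivePlane.pointCount_eq P l
    have h2 : Nat.card {x : P // x ∈ l} ≠ 0 := by omega
    obtain ⟨⟨x, hx⟩⟩ := (Nat.card_ne_zero.mp h2).1
    exact ⟨x, hx⟩
  have hpx : p ≠ x := fun he => h (he ▸ hx)
  have hm := HasLines.mkLine_ax (L := L) hpx
  let w : (incGraph P L).Walk (Sum.inr l) (Sum.inl p) :=
    .cons (incGraph_adj_lp.mpr hx) (.cons (incGraph_adj_pl.mpr hm.2)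
      (.cons (incGraph_adj_lp.mpr hm.1) .nil))
  have hlen : w.length = 3 := rfl
  have hle := hlen ▸ SimpleGraph.dist_le w
  have h0 : (incGraph P L).dist (Sum.inr l) (Sum.inl p) ≠ 0 := by
    rw [SimpleGraph.dist_ne_zero_iff_ne_and_reachable]
    exact ⟨by simp, ⟨w⟩⟩
  have h1 : (incGraph P L).dist (Sum.inr l) (Sum.inl p) ≠ 1 := by
    simp only [ne_eq, SimpleGraph.dist_eq_one_iff_adj]
    exact fun hadj => h hadj
  have h2 : (incGraph P L).dist (Sum.inr l) (Sum.inl p) ≠ 2 := by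
    intro heq
    obtain ⟨w', hw'⟩ := SimpleGraph.exists_walk_of_dist_ne_zero h0
    have : Even w'.length := by rw [hw', heq]; exact even_two
    rw [incGraph_walk_even] at this
    simp at this
  omega

end Aux

lemma complFree_card_le {ι : Type*} [Fintype ι] [DecidableEq ι] [Nonempty ι]
    (A : Finset (ι → Bool)) (h : ∀ a ∈ A, (fun i => !(a i)) ∉ A) :
    A.card ≤ 2 ^ (Fintype.card ι - 1) := by
  have hinj : Function.Injective (fun (a : ι → Bool) (i : ι) => !(a i)) := by
    intro a b hab
    funext i
    have := congrFun hab i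
    simpa using this
  have hdisj : Disjoint A (A.image (fun a i => !(a i))) := by
    rw [Finset.disjoint_left]
    intro b hb hb'
    obtain ⟨a, ha, rfl⟩ := Finset.mem_image.mp hb'
    exact h a ha hb
  have hpos : 1 ≤ Fintype.card ι := Fintype.card_pos
  have h2 : 2 ^ Fintype.card ι = 2 * 2 ^ (Fintype.card ι - 1) := by
    conv_lhs => rw [(Nat.succ_pred_eq_of_pos hpos).symm]
    rw [pow_succ', Nat.pred_eq_sub_one]
  have key : 2 * A.card ≤ 2 * 2 ^ (Fintype.card ι - 1) := by
    calc 2 * A.card = A.card + (A.image (fun a i => !(a i))).card := by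
          rw [Finset.card_image_of_injective _ hinj]; ring
      _ = (A ∪ A.image (fun a i => !(a i))).card :=
          (Finset.card_union_of_disjoint hdisj).symm
      _ ≤ Fintype.card (ι → Bool) := Finset.card_le_univ _
      _ = 2 ^ Fintype.card ι := by simp
      _ = 2 * 2 ^ (Fintype.card ι - 1) := h2
  exact Nat.le_of_mul_le_mul_left key two_pos

/-- If the incidence graph of a projective plane of order `q` has a resolving partition
with `r` point-only classes, `s` line-only classes and `t` mixed classes, then
`(s+t) * 2^(r+t-1) ≥ q² + q + 1`. -/
theorem resolving_partition_lower_bound_lines (P L : Type*) [Membership P L] [Fintype P]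
    [Fintype L] [ProjectivePlane P L] (q : ℕ) (hq : ProjectivePlane.order P L = q)
    (h2 : 2 ≤ q) (r s t : ℕ) (S : Fin r ⊕ Fin s ⊕ Fin t → Set (P ⊕ L))
    (hres : IsResolvingPartition (incGraph P L) S)
    (hpt : ∀ i : Fin r, S (Sum.inl i) ⊆ Set.range Sum.inl)
    (hln : ∀ j : Fin s, S (Sum.inr (Sum.inl j)) ⊆ Set.range Sum.inr)
    (hmix : ∀ m : Fin t, (∃ p : P, Sum.inl p ∈ S (Sum.inr (Sum.inr m))) ∧
      (∃ l : L, Sum.inr l ∈ S (Sum.inr (Sum.inr m)))) :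
    q ^ 2 + q + 1 ≤ (s + t) * 2 ^ (r + t - 1) := by
  classical
  obtain ⟨hne, hdisj, hcover, hresolve⟩ := hres
  -- every vertex belongs to a unique class
  have hex : ∀ v : P ⊕ L, ∃ i, v ∈ S i := by
    intro v
    exact Set.mem_iUnion.mp (hcover ▸ Set.mem_univ v)
  choose cls hcls using hex
  have huniq : ∀ (v : P ⊕ L) (i), v ∈ S i → cls v = i := by
    intro v i hv
    by_contra hneq
    exact Set.disjoint_left.mp (hdisj hneq) (hcls v) hv
  -- the class of a line is not point-only
  have hlcls : ∀ l : L, ∃ c : Fin s ⊕ Fin t, cls (Sum.inr l) = Sum.inr c := by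
    intro l
    cases hc : cls (Sum.inr l) with
    | inl i =>
      exfalso
      obtain ⟨p, hp⟩ := hpt i (hc ▸ hcls (Sum.inr l))
      simp at hp
    | inr c => exact ⟨c, rfl⟩
  choose lcls hlc using hlcls
  -- "near" predicate and binary vector
  set Nr : L → (Fin r ⊕ Fin t) → Prop := fun l i => ∃ p : P, p ∈ l ∧
    Sum.inl p ∈ S (Sum.elim Sum.inl (fun m => Sum.inr (Sum.inr m)) i) with hNrdef
  set F : L → (Fin r ⊕ Fin t) → Bool := fun l i => decide (Nr l i) with hFdef
  have hFval : ∀ l k, F l k = decide (Nr l k) := fun _ _ => rfl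
  -- setDist computations
  have sd_own : ∀ l : L, setDist (incGraph P L) (Sum.inr l) (S (cls (Sum.inr l))) = 0 :=
    fun l => setDist_eq_of ⟨Sum.inr l, hcls _, SimpleGraph.dist_self⟩ (fun _ _ => Nat.zero_le _)
  have sd_pt : ∀ (l : L) (i : Fin r),
      setDist (incGraph P L) (Sum.inr l) (S (Sum.inl i)) = if Nr l (Sum.inl i) then 1 else 3 := by
    intro l i
    by_cases hnear : Nr l (Sum.inl i)
    · rw [if_pos hnear]
      obtain ⟨p, hpl, hpS⟩ := hnear
      refine setDist_eq_of ⟨Sum.inl p, hpS, dist_lp_mem hpl⟩ ?_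
      intro x hx
      obtain ⟨p', rfl⟩ := hpt i hx
      by_cases h' : p' ∈ l
      · rw [dist_lp_mem h']
      · rw [dist_lp_not_mem h']; omega
    · rw [if_neg hnear]
      have hall : ∀ x ∈ S (Sum.inl i), (incGraph P L).dist (Sum.inr l) x = 3 := by
        intro x hx
        obtain ⟨p', rfl⟩ := hpt i hx
        exact dist_lp_not_mem (fun hm => hnear ⟨p', hm, hx⟩)
      obtain ⟨x0, hx0⟩ := hne (Sum.inl i)
      exact setDist_eq_of ⟨x0, hx0, hall x0 hx0⟩ (fun x hx => (hall x hx).ge)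
  have sd_ln : ∀ (l : L) (j : Fin s), cls (Sum.inr l) ≠ Sum.inr (Sum.inl j) →
      setDist (incGraph P L) (Sum.inr l) (S (Sum.inr (Sum.inl j))) = 2 := by
    intro l j hcj
    have hall : ∀ x ∈ S (Sum.inr (Sum.inl j)), (incGraph P L).dist (Sum.inr l) x = 2 := by
      intro x hx
      obtain ⟨l', rfl⟩ := hln j hx
      have hne' : l ≠ l' := by
        rintro rfl
        exact hcj (huniq _ _ hx)
      exact dist_ll hne'
    obtain ⟨x0, hx0⟩ := hne (Sum.inr (Sum.inl j))
    exact setDist_eq_of ⟨x0, hx0, hall x0 hx0⟩ (fun x hx => (hall x hx).ge)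
  have sd_mx : ∀ (l : L) (m : Fin t), cls (Sum.inr l) ≠ Sum.inr (Sum.inr m) →
      setDist (incGraph P L) (Sum.inr l) (S (Sum.inr (Sum.inr m))) =
        if Nr l (Sum.inr m) then 1 else 2 := by
    intro l m hcm
    have hnotl : ∀ x ∈ S (Sum.inr (Sum.inr m)), x ≠ Sum.inr l := by
      intro x hx hxe
      exact hcm (huniq _ _ (hxe ▸ hx))
    have hge : ∀ x ∈ S (Sum.inr (Sum.inr m)), 1 ≤ (incGraph P L).dist (Sum.inr l) x ∧
        (¬ Nr l (Sum.inr m) → 2 ≤ (incGraph P L).dist (Sum.inr l) x) := by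
      intro x hx
      rcases x with p | l'
      · by_cases h' : p ∈ l
        · have hnear : Nr l (Sum.inr m) := ⟨p, h', hx⟩
          rw [dist_lp_mem h']
          exact ⟨le_rfl, fun hn => absurd hnear hn⟩
        · rw [dist_lp_not_mem h']
          exact ⟨by omega, fun _ => by omega⟩
      · have hll' : l ≠ l' := fun he => hnotl _ hx (by rw [he])
        rw [dist_ll hll']
        exact ⟨by omega, fun _ => le_rfl⟩
    by_cases hnear : Nr l (Sum.inr m)
    · rw [if_pos hnear]
      obtain ⟨p, hpl, hpS⟩ := hnear
      exact setDist_eq_of ⟨Sum.inl p, hpS, dist_lp_mem hpl⟩ (fun x hx => (hge x hx).1)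
    · rw [if_neg hnear]
      obtain ⟨l', hl'⟩ := (hmix m).2
      have hll' : l ≠ l' := fun he => hnotl _ hl' (by rw [he])
      exact setDist_eq_of ⟨Sum.inr l', hl', dist_ll hll'⟩ (fun x hx => (hge x hx).2 hnear)
  -- injectivity of the vectors on each fiber
  have hinjF : ∀ l l' : L, lcls l = lcls l' → F l = F l' → l = l' := by
    intro l l' hceq hf
    have hcls_eq : cls (Sum.inr l) = cls (Sum.inr l') := by rw [hlc, hlc, hceq]
    have hNiff : ∀ k, Nr l k ↔ Nr l' k := by
      intro k
      have := congrFun hf k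
      rw [hFval, hFval] at this
      exact decide_eq_decide.mp this
    have key : (Sum.inr l : P ⊕ L) = Sum.inr l' := by
      apply hresolve
      intro i
      rcases i with i | j | m
      · rw [sd_pt l i, sd_pt l' i]
        exact if_congr (hNiff (Sum.inl i)) rfl rfl
      · by_cases hj : cls (Sum.inr l) = Sum.inr (Sum.inl j)
        · have hj' : cls (Sum.inr l') = Sum.inr (Sum.inl j) := hcls_eq ▸ hj
          have e1 := sd_own l
          have e2 := sd_own l'
          rw [hj] at e1
          rw [hj'] at e2
          rw [e1, e2]
        · have hj2 : cls (Sum.inr l') ≠ Sum.inr (Sum.inl j) := hcls_eq ▸ hj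
          rw [sd_ln l j hj, sd_ln l' j hj2]
      · by_cases hm : cls (Sum.inr l) = Sum.inr (Sum.inr m)
        · have hm' : cls (Sum.inr l') = Sum.inr (Sum.inr m) := hcls_eq ▸ hm
          have e1 := sd_own l
          have e2 := sd_own l'
          rw [hm] at e1
          rw [hm'] at e2
          rw [e1, e2]
        · have hm2 : cls (Sum.inr l') ≠ Sum.inr (Sum.inr m) := hcls_eq ▸ hm
          rw [sd_mx l m hm, sd_mx l' m hm2]
          exact if_congr (hNiff (Sum.inr m)) rfl rfl
    exact Sum.inr_injective key
  -- the index type of point-carrying classes is nonempty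
  have hPpos : 0 < Fintype.card P := by
    have := ProjectivePlane.card_points P L
    omega
  obtain ⟨p0⟩ := Fintype.card_pos_iff.mp hPpos
  have hI : Nonempty (Fin r ⊕ Fin t) := by
    cases hc : cls (Sum.inl p0) with
    | inl i => exact ⟨Sum.inl i⟩
    | inr c =>
      cases c with
      | inl j =>
        exfalso
        obtain ⟨l', hl'⟩ := hln j (hc ▸ hcls (Sum.inl p0))
        simp at hl'
      | inr m => exact ⟨Sum.inr m⟩
  haveI := hI
  -- per-fiber bound
  have fiber_bound : ∀ c : Fin s ⊕ Fin t,
      (Finset.univ.filter (fun l : L => lcls l = c)).card ≤ 2 ^ (r + t - 1) := by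
    intro c
    set A := (Finset.univ.filter (fun l : L => lcls l = c)).image F with hA
    have hcard_eq : (Finset.univ.filter (fun l : L => lcls l = c)).card = A.card := by
      rw [hA, Finset.card_image_of_injOn]
      intro a ha b hb hab
      simp only [Finset.mem_filter, Finset.mem_coe] at ha hb
      exact hinjF a b (ha.2.trans hb.2.symm) hab
    have hcompl : ∀ a ∈ A, (fun i => !(a i)) ∉ A := by
      intro a ha hb
      obtain ⟨l, hl, rfl⟩ := Finset.mem_image.mp ha
      obtain ⟨l', hl', heq⟩ := Finset.mem_image.mp hb
      simp only [Finset.mem_filter] at hl hl'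
      by_cases hll : l = l'
      · subst hll
        obtain ⟨i0⟩ := hI
        have hcontr := congrFun heq i0
        simp at hcontr
      · have hp := HasPoints.mkPoint_ax (P := P) (Ne.intro hll)
        have hboth : ∀ k, Sum.inl (HasPoints.mkPoint (P := P) (Ne.intro hll)) ∈
            S (Sum.elim Sum.inl (fun m => Sum.inr (Sum.inr m)) k) →
            Nr l k ∧ Nr l' k := by
          intro k hk
          exact ⟨⟨_, hp.1, hk⟩, ⟨_, hp.2, hk⟩⟩
        set p := HasPoints.mkPoint (P := P) (Ne.intro hll) with hpdef
        have hcontr : ∃ k, Nr l k ∧ Nr l' k := by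
          cases hc : cls (Sum.inl p) with
          | inl i =>
              refine ⟨Sum.inl i, hboth (Sum.inl i) ?_⟩
              show Sum.inl p ∈ S (Sum.inl i)
              rw [← hc]; exact hcls (Sum.inl p)
          | inr c' =>
            cases c' with
            | inl j =>
              exfalso
              obtain ⟨l'', hl''⟩ := hln j (hc ▸ hcls (Sum.inl p))
              simp at hl''
            | inr m =>
              refine ⟨Sum.inr m, hboth (Sum.inr m) ?_⟩
              show Sum.inl p ∈ S (Sum.inr (Sum.inr m))
              rw [← hc]; exact hcls (Sum.inl p)
        obtain ⟨k, hk1, hk2⟩ := hcontr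
        have e := congrFun heq k
        rw [hFval, hFval, decide_eq_true hk2, decide_eq_true hk1] at e
        simp at e
    calc (Finset.univ.filter (fun l : L => lcls l = c)).card = A.card := hcard_eq
      _ ≤ 2 ^ (Fintype.card (Fin r ⊕ Fin t) - 1) := complFree_card_le A hcompl
      _ = 2 ^ (r + t - 1) := by simp
  -- final count
  have hcount : (Finset.univ : Finset L).card =
      ∑ c ∈ (Finset.univ : Finset (Fin s ⊕ Fin t)),
        (Finset.univ.filter (fun l : L => lcls l = c)).card :=
    Finset.card_eq_sum_card_fiberwise (fun l _ => Finset.mem_univ _)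
  have hL : Fintype.card L = q ^ 2 + q + 1 := by
    rw [ProjectivePlane.card_lines P L, hq]
  calc q ^ 2 + q + 1 = Fintype.card L := hL.symm
    _ = (Finset.univ : Finset L).card := Finset.card_univ.symm
    _ = ∑ c ∈ (Finset.univ : Finset (Fin s ⊕ Fin t)),
        (Finset.univ.filter (fun l : L => lcls l = c)).card := hcount
    _ ≤ ∑ _c ∈ (Finset.univ : Finset (Fin s ⊕ Fin t)), 2 ^ (r + t - 1) :=
        Finset.sum_le_sum (fun c _ => fiber_bound c)
    _ = (s + t) * 2 ^ (r + t - 1) := by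
        rw [Finset.sum_const, Finset.card_univ]
        simp [mul_comm]
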